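/- Let n ≥ 2 be an integer and a > 0; assume moreover that 𝒜 is bounded and set K₀ := sup_{s ≥ 0} 𝒜(s). If ∫_0^{K₀} 𝒜⁻¹(t)/√(K₀ − t) dt = +∞, then ∫_0^1 𝒜⁻¹( K₀·(cosh(a t))^{-(n-1)} ) dt = +∞ (as a Lebesgue integral of a nonnegative function). -/

import Mathlib

open MeasureTheory

lemma my_lintegral_image_eq {s : Set ℝ} {f f' : ℝ → ℝ} (hs : MeasurableSet s)
    (hf' : ∀ x ∈ s, HasDerivWithinAt f (f' x) s x) (hf : Set.InjOn f s) (g : ℝ → ENNReal) :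
    ∫⁻ x in f '' s, g x = ∫⁻ x in s, ENNReal.ofReal |f' x| * g (f x) := by
  simpa only [ContinuousLinearMap.det_toSpanSingleton] using
    lintegral_image_eq_lintegral_abs_det_fderiv_mul volume hs
      (fun x hx => (hf' x hx).hasFDerivWithinAt) hf g

lemma my_key_bound (K₀ a : ℝ) (hK₀ : 0 < K₀) (ha : 0 < a) (k : ℕ) (X S : ℝ)
    (hX : 1 ≤ X) (hS : 0 ≤ S) (hS2 : S ^ 2 = X ^ 2 - 1) :
    |K₀ * (-(((k : ℝ) + 1) * X ^ k * (S * a)) / (X ^ (k + 1)) ^ 2)| ≤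
      ((k : ℝ) + 1) * a * Real.sqrt (2 * K₀) * Real.sqrt (K₀ - K₀ / X ^ (k + 1)) := by
  have hXpos : (0:ℝ) < X := lt_of_lt_of_le one_pos hX
  have hY1 : (1:ℝ) ≤ X ^ k := one_le_pow₀ hX
  rw [show X ^ (k+1) = X ^ k * X from pow_succ X k]
  generalize hYdef : X ^ k = Y at hY1 ⊢
  have hYpos : (0:ℝ) < Y := lt_of_lt_of_le one_pos hY1
  have hYX : (0:ℝ) < Y * X := mul_pos hYpos hXpos
  have hYX1 : (1:ℝ) ≤ Y * X := one_le_mul_of_one_le_of_one_le hY1 hX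
  have hX3 : (1:ℝ) ≤ X ^ 3 := one_le_pow₀ hX
  -- key polynomial inequality
  have h1 : X - 1 ≤ Y * X - 1 := by nlinarith
  have h2 : S ^ 2 ≤ (Y * X - 1) * (2 * X) := by
    nlinarith [mul_le_mul h1 (show X + 1 ≤ 2 * X by linarith) (by linarith) (by linarith : (0:ℝ) ≤ Y * X - 1)]
  have hY2 : Y ^ 2 ≤ Y ^ 3 := by nlinarith
  have key : S ^ 2 * Y ^ 2 ≤ 2 * (Y * X - 1) * (Y ^ 3 * X ^ 3) := by
    have ha1 : S ^ 2 * Y ^ 2 ≤ ((Y * X - 1) * (2 * X)) * Y ^ 3 :=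
      mul_le_mul h2 hY2 (sq_nonneg Y) (by nlinarith)
    have ha2 : ((Y * X - 1) * (2 * X)) * Y ^ 3 ≤ 2 * (Y * X - 1) * (Y ^ 3 * X ^ 3) := by
      nlinarith [mul_nonneg (mul_nonneg (show (0:ℝ) ≤ Y * X - 1 by linarith)
        (pow_pos hYpos 3).le) (show (0:ℝ) ≤ X ^ 3 - X by nlinarith)]
    linarith
  have hC2 : (((k : ℝ) + 1) * a * Real.sqrt (2 * K₀)) ^ 2 =
      ((k : ℝ) + 1) ^ 2 * a ^ 2 * (2 * K₀) := by
    rw [mul_pow, mul_pow, Real.sq_sqrt (by positivity)]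
  have hsq : (K₀ * (-(((k : ℝ) + 1) * Y * (S * a)) / (Y * X) ^ 2)) ^ 2 ≤
      (((k : ℝ) + 1) * a * Real.sqrt (2 * K₀)) ^ 2 * (K₀ - K₀ / (Y * X)) := by
    rw [hC2]
    have e1 : (K₀ * (-(((k : ℝ) + 1) * Y * (S * a)) / (Y * X) ^ 2)) ^ 2 =
        (K₀ ^ 2 * ((k : ℝ) + 1) ^ 2 * a ^ 2 * (S ^ 2 * Y ^ 2)) / (Y * X) ^ 4 := by
      field_simp
    have e2 : ((k : ℝ) + 1) ^ 2 * a ^ 2 * (2 * K₀) * (K₀ - K₀ / (Y * X)) =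
        (K₀ ^ 2 * ((k : ℝ) + 1) ^ 2 * a ^ 2 * (2 * (Y * X - 1) * (Y ^ 3 * X ^ 3))) / (Y * X) ^ 4 := by
      field_simp
    rw [e1, e2]
    gcongr
  calc |K₀ * (-(((k : ℝ) + 1) * Y * (S * a)) / (Y * X) ^ 2)|
      = Real.sqrt ((K₀ * (-(((k : ℝ) + 1) * Y * (S * a)) / (Y * X) ^ 2)) ^ 2) :=
        (Real.sqrt_sq_eq_abs _).symm
    _ ≤ Real.sqrt ((((k : ℝ) + 1) * a * Real.sqrt (2 * K₀)) ^ 2 * (K₀ - K₀ / (Y * X))) :=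
        Real.sqrt_le_sqrt hsq
    _ = ((k : ℝ) + 1) * a * Real.sqrt (2 * K₀) * Real.sqrt (K₀ - K₀ / (Y * X)) := by
        rw [Real.sqrt_mul (sq_nonneg _), Real.sqrt_sq (by positivity)]

set_option maxHeartbeats 2000000 in
/-- Let `n ≥ 2`, `a > 0`; assume 𝒜 is bounded and set
`K₀ := sup_{s ≥ 0} 𝒜(s)`. If `∫_0^{K₀} 𝒜⁻¹(t)/√(K₀ − t) dt = +∞`, then
`∫_0^1 𝒜⁻¹( K₀·(cosh(a t))^{-(n-1)} ) dt = +∞` (as a Lebesgue integral of a nonnegative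
function). -/
theorem stmt_13 (A Ainv : ℝ → ℝ)
    (hA : ContDiffOn ℝ 1 A (Set.Ici 0))
    (hA0 : A 0 = 0)
    (hA' : ∀ s : ℝ, 0 < s → 0 < deriv A s)
    (q δ₀ D : ℝ) (hq : 0 < q) (hδ₀ : 0 < δ₀) (hD : 0 < D)
    (hgrowth : ∀ s ∈ Set.Icc (0:ℝ) δ₀, D * s ^ q ≤ A s)
    (hbdd : BddAbove (A '' Set.Ici 0))
    (K₀ : ℝ) (hK₀ : K₀ = sSup (A '' Set.Ici 0))
    (hAinvL : ∀ s : ℝ, 0 ≤ s → Ainv (A s) = s)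
    (hAinvR : ∀ t : ℝ, 0 ≤ t → t < K₀ → 0 ≤ Ainv t ∧ A (Ainv t) = t)
    (n : ℕ) (hn : 2 ≤ n) (a : ℝ) (ha : 0 < a)
    (hdiv : ∫⁻ t in Set.Ioo (0:ℝ) K₀, ENNReal.ofReal (Ainv t / Real.sqrt (K₀ - t)) = ⊤) :
    ∫⁻ t in Set.Ioo (0:ℝ) 1,
      ENNReal.ofReal (Ainv (K₀ / Real.cosh (a * t) ^ (n - 1))) = ⊤ := by
  obtain ⟨k, rfl⟩ : ∃ k, n = k + 2 := ⟨n - 2, by omega⟩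
  have hn1 : k + 2 - 1 = k + 1 := rfl
  rw [hn1]
  -- K₀ > 0
  have hAδ : 0 < A δ₀ := lt_of_lt_of_le (by positivity) (hgrowth δ₀ ⟨hδ₀.le, le_refl _⟩)
  have hK₀pos : 0 < K₀ := by
    have : A δ₀ ≤ K₀ := hK₀ ▸ le_csSup hbdd ⟨δ₀, hδ₀.le, rfl⟩
    linarith
  -- A strictly monotone on [0,∞)
  have hmono : StrictMonoOn A (Set.Ici 0) := by
    apply strictMonoOn_of_deriv_pos (convex_Ici 0) hA.continuousOn
    intro x hx
    rw [interior_Ici] at hx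
    exact hA' x hx
  -- Ainv monotone on [0, K₀)
  have hAinvMono : ∀ t t' : ℝ, 0 ≤ t → t ≤ t' → t' < K₀ → Ainv t ≤ Ainv t' := by
    intro t t' ht htt' ht'
    by_contra h
    push_neg at h
    have h1 := (hAinvR t ht (lt_of_le_of_lt htt' ht')).1
    have h2 := (hAinvR t' (le_trans ht htt') ht').1
    have := hmono (Set.mem_Ici.mpr h2) (Set.mem_Ici.mpr h1) h
    rw [(hAinvR t ht (lt_of_le_of_lt htt' ht')).2, (hAinvR t' (le_trans ht htt') ht').2] at this
    linarith
  set φ : ℝ → ℝ := fun u => K₀ / Real.cosh (a * u) ^ (k + 1) with hφ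
  set K₁ : ℝ := K₀ / Real.cosh a ^ (k + 1) with hK₁
  have hcosha : 1 < Real.cosh a := by
    rw [← Real.cosh_zero, Real.cosh_lt_cosh]
    simpa using ne_of_gt ha
  have hK₁pos : 0 < K₁ := div_pos hK₀pos (pow_pos (Real.cosh_pos a) _)
  have hK₁lt : K₁ < K₀ := by
    rw [hK₁]
    exact div_lt_self hK₀pos (one_lt_pow₀ hcosha (by omega))
  -- φ is strictly decreasing on [0,∞)
  have hanti : StrictAntiOn φ (Set.Ici 0) := by
    intro u hu v hv huv
    have h1 : Real.cosh (a * u) < Real.cosh (a * v) := by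
      rw [Real.cosh_lt_cosh]
      rw [abs_of_nonneg (mul_nonneg ha.le hu), abs_of_nonneg (mul_nonneg ha.le (le_trans hu huv.le))]
      exact (mul_lt_mul_iff_right₀ ha).mpr huv
    have h2 : Real.cosh (a * u) ^ (k + 1) < Real.cosh (a * v) ^ (k + 1) :=
      pow_lt_pow_left₀ h1 (Real.cosh_pos _).le (by omega)
    exact div_lt_div_of_pos_left hK₀pos (pow_pos (Real.cosh_pos _) _) h2
  -- φ 0 = K₀, φ 1 = K₁
  have hφ0 : φ 0 = K₀ := by simp [hφ]
  have hφ1 : φ 1 = K₁ := by simp [hφ, hK₁]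
  have hφcont : Continuous φ := by
    apply continuous_const.div (by continuity)
    intro x
    exact (pow_pos (Real.cosh_pos _) _).ne'
  -- image of (0,1) under φ is (K₁, K₀)
  have himg : φ '' Set.Ioo 0 1 = Set.Ioo K₁ K₀ := by
    apply Set.Subset.antisymm
    · rintro x ⟨u, hu, rfl⟩
      constructor
      · rw [← hφ1]; exact hanti (le_of_lt hu.1) (by norm_num) hu.2
      · rw [← hφ0]; exact hanti (le_refl (0:ℝ)) (le_of_lt hu.1) hu.1
    · have := intermediate_value_Ioo' (by norm_num : (0:ℝ) ≤ 1) hφcont.continuousOn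
      rw [hφ0, hφ1] at this
      exact this
  -- derivative of φ
  set φ' : ℝ → ℝ := fun u =>
    K₀ * (-(((k : ℝ) + 1) * Real.cosh (a * u) ^ k * (Real.sinh (a * u) * a)) /
      (Real.cosh (a * u) ^ (k + 1)) ^ 2) with hφ'
  have hderiv : ∀ u : ℝ, HasDerivAt φ (φ' u) u := by
    intro u
    have h1 : HasDerivAt (fun u => Real.cosh (a * u)) (Real.sinh (a * u) * a) u := by
      simpa using ((hasDerivAt_id u).const_mul a).cosh
    have h2 : HasDerivAt (fun u => Real.cosh (a * u) ^ (k + 1))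
        (((k : ℝ) + 1) * Real.cosh (a * u) ^ k * (Real.sinh (a * u) * a)) u := by
      have := h1.pow (k + 1)
      push_cast at this
      exact this
    have h3 := (h2.inv (pow_pos (Real.cosh_pos _) _).ne').const_mul K₀
    simp only [hφ, hφ']
    simpa only [← div_eq_mul_inv, Pi.inv_apply] using h3
  -- key bound: |φ' u| ≤ C * sqrt (K₀ - φ u) for u ≥ 0
  set C : ℝ := ((k : ℝ) + 1) * a * Real.sqrt (2 * K₀) with hC
  have hCpos : 0 < C := by
    rw [hC]; positivity
  have hbound : ∀ u : ℝ, 0 ≤ u → |φ' u| ≤ C * Real.sqrt (K₀ - φ u) := by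
    intro u hu
    have h := my_key_bound K₀ a hK₀pos ha k (Real.cosh (a * u)) (Real.sinh (a * u))
      (Real.one_le_cosh _) (Real.sinh_nonneg_iff.mpr (by positivity))
      (by have := Real.cosh_sq (a * u); linarith)
    simp only [hφ, hφ', hC]
    exact h
  -- finiteness of the integral over (0, K₁)
  set g : ℝ → ENNReal := fun t => ENNReal.ofReal (Ainv t / Real.sqrt (K₀ - t)) with hg
  have hfin : ∫⁻ t in Set.Ioo (0:ℝ) K₁, g t ≠ ⊤ := by
    have hAinvK₁ := hAinvR K₁ hK₁pos.le hK₁lt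
    have hbd : ∀ t ∈ Set.Ioo (0:ℝ) K₁, g t ≤ ENNReal.ofReal (Ainv K₁ / Real.sqrt (K₀ - K₁)) := by
      intro t ht
      apply ENNReal.ofReal_le_ofReal
      have h1 : Ainv t ≤ Ainv K₁ := hAinvMono t K₁ ht.1.le ht.2.le hK₁lt
      have h2 : Real.sqrt (K₀ - K₁) ≤ Real.sqrt (K₀ - t) := Real.sqrt_le_sqrt (by linarith [ht.2])
      have h3 : 0 < Real.sqrt (K₀ - K₁) := Real.sqrt_pos.mpr (by linarith)
      exact div_le_div₀ hAinvK₁.1 h1 h3 h2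
    have : ∫⁻ t in Set.Ioo (0:ℝ) K₁, g t
        ≤ ENNReal.ofReal (Ainv K₁ / Real.sqrt (K₀ - K₁)) * volume (Set.Ioo (0:ℝ) K₁) := by
      rw [← setLIntegral_const]
      exact setLIntegral_mono measurable_const hbd
    exact ne_top_of_le_ne_top
      (ENNReal.mul_ne_top ENNReal.ofReal_ne_top
        (by rw [Real.volume_Ioo]; exact ENNReal.ofReal_ne_top)) this
  -- divergence over (K₁, K₀)
  have hdiv2 : ∫⁻ t in Set.Ioo K₁ K₀, g t = ⊤ := by
    have hsplit : Set.Ioo (0:ℝ) K₀ = Set.Ioo 0 K₁ ∪ Set.Ico K₁ K₀ :=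
      (Set.Ioo_union_Ico_eq_Ioo hK₁pos hK₁lt.le).symm
    rw [hsplit, lintegral_union measurableSet_Ico ((Set.Iio_disjoint_Ici le_rfl).mono Set.Ioo_subset_Iio_self Set.Ico_subset_Ici_self)] at hdiv
    have hIcoIoo : ∫⁻ t in Set.Ico K₁ K₀, g t = ∫⁻ t in Set.Ioo K₁ K₀, g t := by
      rw [Measure.restrict_congr_set Ioo_ae_eq_Ico.symm]
    rw [hIcoIoo] at hdiv
    rcases ENNReal.add_eq_top.mp hdiv with h | h
    · exact absurd h hfin
    · exact h
  -- change of variables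
  have hCV : ∫⁻ t in Set.Ioo K₁ K₀, g t =
      ∫⁻ u in Set.Ioo (0:ℝ) 1, ENNReal.ofReal |φ' u| * g (φ u) := by
    rw [← himg]
    exact my_lintegral_image_eq measurableSet_Ioo
      (fun u _ => (hderiv u).hasDerivWithinAt)
      (Set.InjOn.mono (Set.Ioo_subset_Icc_self.trans (Set.Icc_subset_Ici_self))
        hanti.injOn) g
  -- pointwise bound on (0,1)
  have hpoint : ∀ u ∈ Set.Ioo (0:ℝ) 1, ENNReal.ofReal |φ' u| * g (φ u) ≤
      ENNReal.ofReal C * ENNReal.ofReal (Ainv (φ u)) := by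
    intro u hu
    have hφuIoo : φ u ∈ Set.Ioo K₁ K₀ := himg ▸ ⟨u, hu, rfl⟩
    have hφupos : 0 < φ u := lt_trans hK₁pos hφuIoo.1
    have hφult : φ u < K₀ := hφuIoo.2
    have hAinvφ := hAinvR (φ u) hφupos.le hφult
    have hs : 0 < Real.sqrt (K₀ - φ u) := Real.sqrt_pos.mpr (by linarith)
    rw [hg, ← ENNReal.ofReal_mul (abs_nonneg _), ← ENNReal.ofReal_mul hCpos.le]
    apply ENNReal.ofReal_le_ofReal
    have h1 : |φ' u| * (Ainv (φ u) / Real.sqrt (K₀ - φ u)) ≤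
        C * Real.sqrt (K₀ - φ u) * (Ainv (φ u) / Real.sqrt (K₀ - φ u)) := by
      apply mul_le_mul_of_nonneg_right (hbound u hu.1.le)
      exact div_nonneg hAinvφ.1 hs.le
    calc |φ' u| * (Ainv (φ u) / Real.sqrt (K₀ - φ u)) ≤
        C * Real.sqrt (K₀ - φ u) * (Ainv (φ u) / Real.sqrt (K₀ - φ u)) := h1
      _ = C * Ainv (φ u) := by
          rw [mul_assoc, mul_comm (Real.sqrt (K₀ - φ u)), div_mul_cancel₀ _ hs.ne']
  -- conclude
  have hfinal : (⊤ : ENNReal) ≤ ENNReal.ofReal C *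
      ∫⁻ u in Set.Ioo (0:ℝ) 1, ENNReal.ofReal (Ainv (φ u)) := by
    calc (⊤ : ENNReal) = ∫⁻ u in Set.Ioo (0:ℝ) 1, ENNReal.ofReal |φ' u| * g (φ u) := by
          rw [← hCV, hdiv2]
      _ ≤ ∫⁻ u in Set.Ioo (0:ℝ) 1, ENNReal.ofReal C * ENNReal.ofReal (Ainv (φ u)) :=
          setLIntegral_mono' measurableSet_Ioo hpoint
      _ = ENNReal.ofReal C * ∫⁻ u in Set.Ioo (0:ℝ) 1, ENNReal.ofReal (Ainv (φ u)) :=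
          lintegral_const_mul' _ _ ENNReal.ofReal_ne_top
  by_contra hcon
  have : ENNReal.ofReal C * (∫⁻ u in Set.Ioo (0:ℝ) 1, ENNReal.ofReal (Ainv (φ u))) ≠ ⊤ :=
    ENNReal.mul_ne_top ENNReal.ofReal_ne_top hcon
  exact this (top_le_iff.mp hfinal)
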